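/- For any two density operators ρ and σ on a finite-dimensional Hilbert space, F(ρ,σ)²/min{rank ρ, rank σ} ≤ Tr(ρσ) ≤ F(ρ,σ)², where F(ρ,σ) = Tr√(√ρ σ √ρ) is the fidelity. -/

import Mathlib

open Matrix Kronecker BigOperators
open scoped ComplexOrder

/-- The positive semidefinite square root of a positive semidefinite matrix
(the definition `Matrix.PosSemidef.sqrt` of the older Mathlib, removed since). -/
noncomputable def Matrix.PosSemidef.sqrt {n 𝕜 : Type*} [Fintype n] [RCLike 𝕜] [DecidableEq n]
    {A : Matrix n n 𝕜} (hA : A.PosSemidef) : Matrix n n 𝕜 :=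
  hA.1.eigenvectorUnitary.1 * diagonal ((↑) ∘ (√·) ∘ hA.1.eigenvalues) *
    (star hA.1.eigenvectorUnitary : Matrix n n 𝕜)

/-- Trace norm (Schatten 1-norm): `Tr √(XᴴX)`. -/
noncomputable def traceNorm {m n : Type*} [Fintype m] [Fintype n] [DecidableEq n]
    (X : Matrix m n ℂ) : ℝ :=
  ((Matrix.posSemidef_conjTranspose_mul_self X).sqrt.trace).re

section Aux

variable {d : ℕ}

lemma trace_eq_sum_eigs {A : Matrix (Fin d) (Fin d) ℂ} (hA : A.IsHermitian) :
    A.trace = ∑ i, (hA.eigenvalues i : ℂ) := by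
  conv_lhs => rw [hA.spectral_theorem]
  rw [Unitary.conjStarAlgAut_apply]
  rw [Matrix.trace_mul_cycle, Unitary.coe_star_mul_self, Matrix.one_mul, Matrix.trace_diagonal]
  rfl

lemma trace_sqrt_eq_sum_sqrt_eigs {A : Matrix (Fin d) (Fin d) ℂ} (hA : A.PosSemidef) :
    hA.sqrt.trace = ∑ i, (Real.sqrt (hA.1.eigenvalues i) : ℂ) := by
  rw [Matrix.PosSemidef.sqrt, Matrix.trace_mul_cycle, Unitary.coe_star_mul_self,
    Matrix.one_mul, Matrix.trace_diagonal]
  rfl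

lemma rank_pos_of_trace_one {A : Matrix (Fin d) (Fin d) ℂ} (hA : A.IsHermitian)
    (hAt : A.trace = 1) : 0 < A.rank := by
  by_contra h
  push_neg at h
  have hr : A.rank = 0 := Nat.le_zero.mp h
  rw [hA.rank_eq_card_non_zero_eigs, Fintype.card_eq_zero_iff] at hr
  have : ∀ i, hA.eigenvalues i = 0 := fun i => by
    by_contra hi; exact hr.false ⟨i, hi⟩
  rw [trace_eq_sum_eigs hA] at hAt
  simp [this] at hAt

lemma Matrix.PosSemidef.posSemidef_sqrt {A : Matrix (Fin d) (Fin d) ℂ} (hA : A.PosSemidef) :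
    hA.sqrt.PosSemidef := by
  unfold Matrix.PosSemidef.sqrt
  have hD : (diagonal ((↑) ∘ (√·) ∘ hA.1.eigenvalues) : Matrix (Fin d) (Fin d) ℂ).PosSemidef :=
    posSemidef_diagonal_iff.mpr (fun i => by simp [Real.sqrt_nonneg])
  exact hD.mul_mul_conjTranspose_same (hA.1.eigenvectorUnitary : Matrix (Fin d) (Fin d) ℂ)

lemma Matrix.PosSemidef.sqrt_mul_self {A : Matrix (Fin d) (Fin d) ℂ} (hA : A.PosSemidef) :
    hA.sqrt * hA.sqrt = A := by
  unfold Matrix.PosSemidef.sqrt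
  conv_rhs => rw [hA.1.spectral_theorem]
  rw [Unitary.conjStarAlgAut_apply]
  simp only [Matrix.mul_assoc]
  rw [← Matrix.mul_assoc (star hA.1.eigenvectorUnitary : Matrix (Fin d) (Fin d) ℂ)
    (hA.1.eigenvectorUnitary : Matrix (Fin d) (Fin d) ℂ), Unitary.coe_star_mul_self,
    Matrix.one_mul, ← Matrix.mul_assoc (diagonal _) (diagonal _), diagonal_mul_diagonal]
  congr 3
  funext i
  simp only [Function.comp_apply]
  rw [← RCLike.ofReal_mul, Real.mul_self_sqrt (hA.eigenvalues_nonneg i)]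

end Aux

set_option maxHeartbeats 1000000 in
/-- for density operators `ρ, σ`,
`F(ρ,σ)² / min{rank ρ, rank σ} ≤ Tr(ρσ) ≤ F(ρ,σ)²`, where
`F(ρ,σ) = Tr √(√ρ σ √ρ) = ‖√ρ √σ‖₁` is the fidelity. -/
theorem fidelity_sq_bounds_trace_mul {d : ℕ}
    (ρ σ : Matrix (Fin d) (Fin d) ℂ)
    (hρ : ρ.PosSemidef) (hρt : ρ.trace = 1) (hσ : σ.PosSemidef) (hσt : σ.trace = 1) :
    (traceNorm (hρ.sqrt * hσ.sqrt))^2 / (min ρ.rank σ.rank : ℝ) ≤ ((ρ * σ).trace).re ∧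
    ((ρ * σ).trace).re ≤ (traceNorm (hρ.sqrt * hσ.sqrt))^2 := by
  classical
  set A := hρ.sqrt * hσ.sqrt with hAdef
  have hB : (Aᴴ * A).PosSemidef := Matrix.posSemidef_conjTranspose_mul_self A
  set f : Fin d → ℝ := hB.1.eigenvalues with hfdef
  have hf0 : ∀ i, 0 ≤ f i := hB.eigenvalues_nonneg
  -- Tr(ρσ) = Tr(AᴴA) = ∑ f i
  have hAH : Aᴴ = hσ.sqrt * hρ.sqrt := by
    rw [hAdef, Matrix.conjTranspose_mul, hρ.posSemidef_sqrt.1.eq, hσ.posSemidef_sqrt.1.eq]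
  have h1 : ρ * σ = hρ.sqrt * hρ.sqrt * (hσ.sqrt * hσ.sqrt) := by
    rw [hρ.sqrt_mul_self, hσ.sqrt_mul_self]
  have htr : (ρ * σ).trace = (Aᴴ * A).trace := by
    rw [h1, hAH, hAdef]
    rw [Matrix.trace_mul_comm (hρ.sqrt * hρ.sqrt) (hσ.sqrt * hσ.sqrt)]
    rw [show hσ.sqrt * hρ.sqrt * (hρ.sqrt * hσ.sqrt)
        = hσ.sqrt * hρ.sqrt * hρ.sqrt * hσ.sqrt from by simp only [Matrix.mul_assoc]]
    rw [Matrix.trace_mul_cycle (hσ.sqrt * hρ.sqrt) hρ.sqrt hσ.sqrt]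
    simp only [Matrix.mul_assoc]
  have htrB : ((ρ * σ).trace).re = ∑ i, f i := by
    rw [htr, trace_eq_sum_eigs hB.1]
    simp [Complex.ofReal_re]
    rfl
  -- trace norm = ∑ √(f i)
  have htn : traceNorm A = ∑ i, Real.sqrt (f i) := by
    rw [traceNorm, trace_sqrt_eq_sum_sqrt_eigs hB]
    simp [Complex.ofReal_re]
    rfl
  -- upper bound
  have hupper : ((ρ * σ).trace).re ≤ (traceNorm A) ^ 2 := by
    rw [htrB, htn]
    calc ∑ i, f i = ∑ i, (Real.sqrt (f i)) ^ 2 := by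
          refine Finset.sum_congr rfl fun i _ => ?_
          rw [Real.sq_sqrt (hf0 i)]
      _ ≤ (∑ i, Real.sqrt (f i)) ^ 2 :=
          Finset.sum_sq_le_sq_sum_of_nonneg fun i _ => Real.sqrt_nonneg _
  refine ⟨?_, hupper⟩
  -- rank bound
  have hrankB : (Aᴴ * A).rank ≤ min ρ.rank σ.rank := by
    have hρr : hρ.sqrt.rank = ρ.rank := by
      conv_rhs => rw [← hρ.sqrt_mul_self]
      rw [← Matrix.rank_conjTranspose_mul_self hρ.sqrt]
      congr 1
      rw [hρ.posSemidef_sqrt.1.eq]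
    have hσr : hσ.sqrt.rank = σ.rank := by
      conv_rhs => rw [← hσ.sqrt_mul_self]
      rw [← Matrix.rank_conjTranspose_mul_self hσ.sqrt]
      congr 1
      rw [hσ.posSemidef_sqrt.1.eq]
    rw [Matrix.rank_conjTranspose_mul_self]
    refine le_min ?_ ?_
    · rw [← hρr]; exact Matrix.rank_mul_le_left _ _
    · rw [← hσr]; exact Matrix.rank_mul_le_right _ _
  -- Cauchy-Schwarz: (∑ √f)² ≤ rank(AᴴA) * ∑ f
  set s : Finset (Fin d) := Finset.univ.filter (fun i => f i ≠ 0) with hsdef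
  have hsum_sqrt : ∑ i, Real.sqrt (f i) = ∑ i ∈ s, Real.sqrt (f i) := by
    refine (Finset.sum_subset (Finset.filter_subset _ _) fun i _ hi => ?_).symm
    simp only [hsdef, Finset.mem_filter, Finset.mem_univ, true_and, not_not] at hi
    rw [hi, Real.sqrt_zero]
  have hsum_f : ∑ i, f i = ∑ i ∈ s, f i := by
    refine (Finset.sum_subset (Finset.filter_subset _ _) fun i _ hi => ?_).symm
    simpa only [hsdef, Finset.mem_filter, Finset.mem_univ, true_and, not_not] using hi
  have hcard : (Aᴴ * A).rank = s.card := by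
    rw [hB.1.rank_eq_card_non_zero_eigs, Fintype.card_subtype]
  have hCS : (traceNorm A) ^ 2 ≤ ((Aᴴ * A).rank : ℝ) * ((ρ * σ).trace).re := by
    rw [htn, htrB, hsum_sqrt, hsum_f, hcard]
    calc (∑ i ∈ s, Real.sqrt (f i)) ^ 2
        = (∑ i ∈ s, Real.sqrt (f i) * 1) ^ 2 := by simp
      _ ≤ (∑ i ∈ s, (Real.sqrt (f i)) ^ 2) * ∑ i ∈ s, (1:ℝ) ^ 2 :=
          Finset.sum_mul_sq_le_sq_mul_sq s _ _
      _ = (s.card : ℝ) * ∑ i ∈ s, f i := by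
          rw [mul_comm]
          congr 1
          · simp
          · exact Finset.sum_congr rfl fun i _ => Real.sq_sqrt (hf0 i)
  -- conclude
  have hmpos : (0:ℝ) < (min ρ.rank σ.rank : ℝ) := by
    have h1 := rank_pos_of_trace_one hρ.1 hρt
    have h2 := rank_pos_of_trace_one hσ.1 hσt
    exact_mod_cast lt_min h1 h2
  rw [div_le_iff₀ hmpos]
  have hT0 : 0 ≤ ((ρ * σ).trace).re := by
    rw [htrB]; exact Finset.sum_nonneg fun i _ => hf0 i
  calc (traceNorm A) ^ 2 ≤ ((Aᴴ * A).rank : ℝ) * ((ρ * σ).trace).re := hCS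
    _ ≤ (min ρ.rank σ.rank : ℝ) * ((ρ * σ).trace).re := by
        refine mul_le_mul_of_nonneg_right ?_ hT0
        exact_mod_cast hrankB
    _ = ((ρ * σ).trace).re * (min ρ.rank σ.rank : ℝ) := mul_comm _ _
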